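/- Let γ : ℝ → ℝ² be the tricuspoid parametrization γ(φ) = (2cos φ + cos 2φ, 2sin φ − sin 2φ). Let n ≥ 3 be an integer and suppose φ ∈ [0, 2π/3] satisfies ∫₀^φ ‖γ'(ψ)‖ dψ = 16/n (so γ(φ) is the first n-division point of the tricuspoid). Then the squared polar radius satisfies ‖γ(φ)‖² = (9n² − 96n + 288)/n². -/

import Mathlib

open Real
set_option maxHeartbeats 800000

/-- The squared polar radius of the first `n`-division point of the tricuspoid
is `(9n² − 96n + 288)/n²`. -/
theorem tricuspoid_division_point_polar_radius_sq
    (γ : ℝ → EuclideanSpace ℝ (Fin 2))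
    (hγ : ∀ φ : ℝ, γ φ =
      ![2 * Real.cos φ + Real.cos (2 * φ),
        2 * Real.sin φ - Real.sin (2 * φ)])
    (n : ℕ) (hn : 3 ≤ n)
    (φ : ℝ) (hφ0 : 0 ≤ φ) (hφ1 : φ ≤ 2 * π / 3)
    (hs : (∫ ψ in (0 : ℝ)..φ, ‖deriv γ ψ‖) = 16 / (n : ℝ)) :
    ‖γ φ‖ ^ 2 = (9 * (n : ℝ) ^ 2 - 96 * (n : ℝ) + 288) / (n : ℝ) ^ 2 := by
  have hnR : (0 : ℝ) < (n : ℝ) := by exact_mod_cast Nat.lt_of_lt_of_le (by norm_num) hn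
  set v : ℝ → EuclideanSpace ℝ (Fin 2) := fun ψ =>
    WithLp.toLp 2 ![-2 * Real.sin ψ - 2 * Real.sin (2 * ψ), 2 * Real.cos ψ - 2 * Real.cos (2 * ψ)] with hv
  have hγeq : γ = fun ψ => (EuclideanSpace.equiv (Fin 2) ℝ).symm
      ![2 * Real.cos ψ + Real.cos (2 * ψ), 2 * Real.sin ψ - Real.sin (2 * ψ)] := by
    funext ψ; rw [← hγ ψ]; rfl
  have hderiv : ∀ ψ : ℝ, HasDerivAt γ (v ψ) ψ := by
    intro ψ
    have h0 : HasDerivAt (fun x : ℝ => 2 * Real.cos x + Real.cos (2 * x))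
        (-2 * Real.sin ψ - 2 * Real.sin (2 * ψ)) ψ := by
      have := ((Real.hasDerivAt_cos ψ).const_mul 2).add
        ((Real.hasDerivAt_cos (2 * ψ)).comp ψ ((hasDerivAt_id ψ).const_mul 2))
      exact this.congr_deriv (by ring)
    have h1 : HasDerivAt (fun x : ℝ => 2 * Real.sin x - Real.sin (2 * x))
        (2 * Real.cos ψ - 2 * Real.cos (2 * ψ)) ψ := by
      have := ((Real.hasDerivAt_sin ψ).const_mul 2).sub
        ((Real.hasDerivAt_sin (2 * ψ)).comp ψ ((hasDerivAt_id ψ).const_mul 2))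
      exact this.congr_deriv (by ring)
    have hpi : HasDerivAt (fun x : ℝ =>
        (![2 * Real.cos x + Real.cos (2 * x), 2 * Real.sin x - Real.sin (2 * x)] : Fin 2 → ℝ))
        ![-2 * Real.sin ψ - 2 * Real.sin (2 * ψ), 2 * Real.cos ψ - 2 * Real.cos (2 * ψ)] ψ := by
      rw [hasDerivAt_pi]
      intro i
      fin_cases i
      · simpa using h0
      · simpa using h1
    have := ((EuclideanSpace.equiv (Fin 2) ℝ).symm :
        (Fin 2 → ℝ) →L[ℝ] EuclideanSpace ℝ (Fin 2)).hasFDerivAt.comp_hasDerivAt ψ hpi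
    rw [hγeq]
    exact this
  -- the speed
  have key : ∀ ψ ∈ Set.uIcc (0:ℝ) φ, ‖deriv γ ψ‖ = 4 * Real.sin (3 * ψ / 2) := by
    intro ψ hψ
    rw [Set.uIcc_of_le hφ0] at hψ
    have hψ2 : ψ ≤ 2 * π / 3 := hψ.2.trans hφ1
    have hsin : 0 ≤ Real.sin (3 * ψ / 2) :=
      Real.sin_nonneg_of_nonneg_of_le_pi (by linarith [hψ.1]) (by linarith)
    rw [(hderiv ψ).deriv]
    have hnv : ‖v ψ‖ = Real.sqrt ((-2 * Real.sin ψ - 2 * Real.sin (2*ψ))^2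
        + (2 * Real.cos ψ - 2 * Real.cos (2*ψ))^2) := by
      rw [hv, EuclideanSpace.norm_eq]
      simp [Fin.sum_univ_two, sq_abs]
    have hid : (-2 * Real.sin ψ - 2 * Real.sin (2*ψ))^2
        + (2 * Real.cos ψ - 2 * Real.cos (2*ψ))^2 = (4 * Real.sin (3 * ψ / 2))^2 := by
      have hca : Real.cos (2*ψ + ψ) = Real.cos (2*ψ) * Real.cos ψ - Real.sin (2*ψ) * Real.sin ψ :=
        Real.cos_add (2*ψ) ψ
      have hdb : Real.cos (2 * (3*ψ/2)) = 2 * Real.cos (3*ψ/2)^2 - 1 := Real.cos_two_mul _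
      have he : (2 * (3*ψ/2) : ℝ) = 2*ψ + ψ := by ring
      rw [he] at hdb
      have hp1 := Real.sin_sq_add_cos_sq ψ
      have hp2 := Real.sin_sq_add_cos_sq (2*ψ)
      have hp3 := Real.sin_sq_add_cos_sq (3*ψ/2)
      nlinarith [hca, hdb, hp1, hp2, hp3]
    rw [hnv, hid, Real.sqrt_sq (by positivity)]
  -- the integral
  have hint : (∫ ψ in (0:ℝ)..φ, 4 * Real.sin (3 * ψ / 2))
      = 8/3 * (1 - Real.cos (3 * φ / 2)) := by
    have hF : ∀ x ∈ Set.uIcc (0:ℝ) φ,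
        HasDerivAt (fun y : ℝ => -(8/3) * Real.cos (3 * y / 2)) (4 * Real.sin (3 * x / 2)) x := by
      intro x _
      have h1 : HasDerivAt (fun y : ℝ => 3 * y / 2) (3/2) x := by
        have h := (hasDerivAt_id x).const_mul (3/2 : ℝ)
        simp only [id_eq] at h
        have heq : (fun y : ℝ => 3 * y / 2) = fun y : ℝ => 3/2 * y := by funext y; ring
        rw [heq]
        simpa using h
      have := ((Real.hasDerivAt_cos (3*x/2)).comp x h1).const_mul (-(8/3) : ℝ)
      exact this.congr_deriv (by ring)
    rw [intervalIntegral.integral_eq_sub_of_hasDerivAt hF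
      (Continuous.intervalIntegrable (by fun_prop) 0 φ)]
    simp
    ring
  rw [intervalIntegral.integral_congr key, hint] at hs
  have hcos : Real.cos (3 * φ / 2) = 1 - 6 / (n : ℝ) := by
    field_simp at hs ⊢
    linarith
  -- the final radius
  have h5 : ‖γ φ‖ ^ 2 = 5 + 4 * Real.cos (3 * φ) := by
    rw [EuclideanSpace.norm_eq, hγ φ, Real.sq_sqrt (by positivity), Fin.sum_univ_two]
    simp only [Matrix.cons_val_zero, Matrix.cons_val_one, Matrix.head_cons, Real.norm_eq_abs, sq_abs]
    have hca : Real.cos (2*φ + φ) = Real.cos (2*φ) * Real.cos φ - Real.sin (2*φ) * Real.sin φ :=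
      Real.cos_add (2*φ) φ
    have he : (3 * φ : ℝ) = 2*φ + φ := by ring
    rw [he]
    nlinarith [hca, Real.sin_sq_add_cos_sq φ, Real.sin_sq_add_cos_sq (2*φ)]
  have h6 : Real.cos (3 * φ) = 2 * (1 - 6/(n:ℝ))^2 - 1 := by
    rw [show (3:ℝ) * φ = 2 * (3 * φ / 2) by ring, Real.cos_two_mul, hcos]
  rw [h5, h6]
  field_simp
  ring
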